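/- The only positive integer solutions (k, n) of the equation F_1^2 + 2F_2^2 + 3F_3^2 + ... + kF_k^2 = F_n^2 are (1,1) and (1,2). -/

import Mathlib

open Finset

/-- Catalan-style identity over ℤ. -/
lemma fib_cat (k : ℕ) : (Nat.fib (k+1) : ℤ)^2 = Nat.fib k * Nat.fib (k+1) + Nat.fib k ^2 + (-1)^k := by
  induction k with
  | zero => simp
  | succ k ih =>
    have h2 : (Nat.fib (k+2) : ℤ) = Nat.fib k + Nat.fib (k+1) := by
      exact_mod_cast congrArg (Nat.cast (R := ℤ)) (Nat.fib_add_two (n := k))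
    rw [h2]
    ring_nf
    ring_nf at ih
    linarith [ih]

/-- Master identity: 2·S_k + 2F_k² + (-1)^k = 2k·F_k·F_{k+1} + 1. -/
lemma fib_sum_sq (k : ℕ) :
    2 * ((∑ j ∈ Finset.Icc 1 k, j * Nat.fib j ^ 2 : ℕ) : ℤ) + 2 * (Nat.fib k : ℤ)^2 + (-1)^k
      = 2 * k * Nat.fib k * Nat.fib (k+1) + 1 := by
  induction k with
  | zero => simp
  | succ k ih =>
    rw [Finset.sum_Icc_succ_top (by omega : 1 ≤ k + 1)]
    have h2 : (Nat.fib (k+2) : ℤ) = Nat.fib k + Nat.fib (k+1) := by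
      exact_mod_cast congrArg (Nat.cast (R := ℤ)) (Nat.fib_add_two (n := k))
    have hc := fib_cat k
    push_cast [h2]
    push_cast at ih
    have hpow : ((-1 : ℤ))^(k+1) = -(-1)^k := by ring
    rw [hpow]
    nlinarith [ih, hc]

lemma fib_prod_ge (j : ℕ) : j + 4 ≤ Nat.fib (j+3) * Nat.fib (j+4) := by
  induction j with
  | zero => decide
  | succ j ih =>
    have h1 : 0 < Nat.fib (j+4) := Nat.fib_pos.mpr (by omega)
    have h2 : Nat.fib (j+5) = Nat.fib (j+3) + Nat.fib (j+4) := Nat.fib_add_two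
    have : Nat.fib (j+4) * Nat.fib (j+5) = Nat.fib (j+3) * Nat.fib (j+4) + Nat.fib (j+4) * Nat.fib (j+4) := by
      rw [h2]; ring
    nlinarith

/-- Contradiction engine: if F_m ∣ F_n², F_m² < F_n² < F_{2m}², m ≥ 4, then False. -/
lemma no_sol (m n : ℕ) (hm : 4 ≤ m) (hdvd : Nat.fib m ∣ Nat.fib n ^ 2)
    (h1 : Nat.fib m ^ 2 < Nat.fib n ^ 2) (h2 : Nat.fib n ^ 2 < Nat.fib (2*m) ^ 2) : False := by
  have hmn : m < n := by
    by_contra h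
    exact absurd (Nat.pow_le_pow_left (Nat.fib_mono (by omega : n ≤ m)) 2) (by omega)
  have hn2m : n < 2 * m := by
    by_contra h
    exact absurd (Nat.pow_le_pow_left (Nat.fib_mono (by omega : 2*m ≤ n)) 2) (by omega)
  obtain ⟨d, hd⟩ : ∃ d, d = Nat.gcd m n := ⟨_, rfl⟩
  have hdm : d ∣ m := hd ▸ Nat.gcd_dvd_left m n
  have hdn : d ∣ n := hd ▸ Nat.gcd_dvd_right m n
  have hdpos : 0 < d := hd ▸ Nat.gcd_pos_of_pos_left n (by omega)
  have hdne : d ≠ m := by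
    rintro rfl
    obtain ⟨t, rfl⟩ := hdn
    rcases t with _ | _ | t
    · omega
    · omega
    · nlinarith
  have hdlt : 2 * d ≤ m := by
    obtain ⟨u, hu⟩ := hdm
    rcases u with _ | _ | u
    · omega
    · omega
    · nlinarith
  -- F_m ∣ F_d ^ 2
  have hfd : Nat.fib m ∣ Nat.fib d ^ 2 := by
    have e1 : Nat.fib m ∣ Nat.fib n * Nat.fib n := by
      rwa [← pow_two]
    have e2 : Nat.gcd (Nat.fib m) (Nat.fib n * Nat.fib n)
        ∣ Nat.gcd (Nat.fib m) (Nat.fib n) * Nat.gcd (Nat.fib m) (Nat.fib n) :=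
      Nat.gcd_mul_right_dvd_mul_gcd _ _ _
    have e4 : Nat.gcd (Nat.fib m) (Nat.fib n) = Nat.fib d := by
      rw [← Nat.fib_gcd, hd]
    have e3 : Nat.gcd (Nat.fib m) (Nat.fib n * Nat.fib n) = Nat.fib m :=
      Nat.gcd_eq_left e1
    rw [e3, e4] at e2
    rwa [pow_two]
  have hfdpos : 0 < Nat.fib d ^ 2 := pow_pos (Nat.fib_pos.mpr hdpos) 2
  have hle : Nat.fib m ≤ Nat.fib d ^ 2 := Nat.le_of_dvd hfdpos hfd
  rcases Nat.lt_or_ge d 2 with hd1 | hd2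
  · -- d = 1
    have : d = 1 := by omega
    have hf4 : 3 ≤ Nat.fib m := by
      have h4 : Nat.fib 4 = 3 := by decide
      have := Nat.fib_mono hm
      omega
    rw [this] at hle
    have h1' : Nat.fib 1 = 1 := by decide
    rw [h1'] at hle
    omega
  · -- d ≥ 2 : F_d² < F_{2d} ≤ F_m
    have hlt' : Nat.fib d < Nat.fib (d+1) := Nat.fib_lt_fib_succ hd2
    have h2d : Nat.fib (2*d) = Nat.fib d * (2 * Nat.fib (d+1) - Nat.fib d) := Nat.fib_two_mul d
    have hfdp : 0 < Nat.fib d := Nat.fib_pos.mpr hdpos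
    have hsq : Nat.fib d ^ 2 < Nat.fib (2*d) := by
      rw [h2d, pow_two]
      have hx : Nat.fib d < 2 * Nat.fib (d+1) - Nat.fib d := by omega
      exact Nat.mul_lt_mul_of_le_of_lt (le_refl _) hx hfdp
    have : Nat.fib (2*d) ≤ Nat.fib m := Nat.fib_mono hdlt
    omega

theorem sum_j_fib_sq_eq_fib_sq (k n : ℕ) (hk : 0 < k) (hn : 0 < n) :
    (∑ j ∈ Finset.Icc 1 k, j * Nat.fib j ^ 2) = Nat.fib n ^ 2 ↔
      (k, n) = (1, 1) ∨ (k, n) = (1, 2) := by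
  constructor
  · intro h
    rcases Nat.lt_or_ge k 3 with hk3 | hk3
    · -- k = 1 or 2
      interval_cases k
      · -- k = 1
        rw [show Finset.Icc 1 1 = {1} from Finset.Icc_self 1, Finset.sum_singleton] at h
        rw [show Nat.fib 1 = 1 from by decide] at h
        norm_num at h
        -- h : 1 = fib n ^ 2
        have hfn : Nat.fib n = 1 := by nlinarith [h, sq_nonneg (Nat.fib n)]
        have : n < 3 := by
          by_contra hge
          have h3 : Nat.fib 3 = 2 := by decide
          have : Nat.fib 3 ≤ Nat.fib n := Nat.fib_mono (by omega)
          omega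
        interval_cases n
        · left; rfl
        · right; rfl
      · -- k = 2 : sum = 3
        have hs : (∑ j ∈ Finset.Icc 1 2, j * Nat.fib j ^ 2) = 3 := by decide
        rw [hs] at h
        exfalso
        rcases Nat.lt_or_ge (Nat.fib n) 2 with h1 | h1
        · nlinarith
        · nlinarith
    · -- k ≥ 3 : derive contradiction
      exfalso
      have hmaster := fib_sum_sq k
      rw [h] at hmaster
      have hprod : k + 1 ≤ Nat.fib k * Nat.fib (k+1) := by
        obtain ⟨j, rfl⟩ : ∃ j, k = j + 3 := ⟨k - 3, by omega⟩
        exact fib_prod_ge j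
      have hf2k : Nat.fib k * Nat.fib (k+1) ≤ Nat.fib (2*k) := by
        have hmono : Nat.fib k ≤ Nat.fib (k+1) := Nat.fib_mono (by omega)
        rw [Nat.fib_two_mul]
        exact Nat.mul_le_mul_left _ (by omega)
      have hfkpos : 0 < Nat.fib k := Nat.fib_pos.mpr (by omega)
      have hfk1pos : 0 < Nat.fib (k+1) := Nat.fib_pos.mpr (by omega)
      rcases Nat.even_or_odd k with hke | hko
      · -- k even, m = k : F_n² + F_k² = k F_k F_{k+1}
        have hk4 : 4 ≤ k := by obtain ⟨t, rfl⟩ := hke; omega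
        have hneg : ((-1 : ℤ))^k = 1 := hke.neg_one_pow
        rw [hneg] at hmaster
        push_cast at hmaster
        have E1 : Nat.fib n ^ 2 + Nat.fib k ^ 2 = k * Nat.fib k * Nat.fib (k+1) := by
          have key : ((Nat.fib n ^ 2 + Nat.fib k ^ 2 : ℕ) : ℤ)
              = ((k * Nat.fib k * Nat.fib (k+1) : ℕ) : ℤ) := by push_cast; linarith [hmaster]
          exact_mod_cast key
        have hdvd : Nat.fib k ∣ Nat.fib n ^ 2 := by
          have hdsum : Nat.fib k ∣ Nat.fib n ^ 2 + Nat.fib k ^ 2 := by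
            rw [E1]; exact ⟨k * Nat.fib (k+1), by ring⟩
          have hdk2 : Nat.fib k ∣ Nat.fib k ^ 2 := ⟨Nat.fib k, by ring⟩
          exact (Nat.dvd_add_iff_left hdk2).mpr hdsum
        have hklt : Nat.fib k < Nat.fib (k+1) := Nat.fib_lt_fib_succ (by omega)
        have a1 : 4 * (Nat.fib k * Nat.fib (k+1)) ≤ k * (Nat.fib k * Nat.fib (k+1)) :=
          Nat.mul_le_mul hk4 (le_refl _)
        have a2 : Nat.fib k * Nat.fib k < Nat.fib k * Nat.fib (k+1) := by
          exact Nat.mul_lt_mul_of_le_of_lt (le_refl _) hklt hfkpos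
        have h1 : Nat.fib k ^ 2 < Nat.fib n ^ 2 := by nlinarith [E1, a1, a2]
        have c1 : k * (Nat.fib k * Nat.fib (k+1))
            < (Nat.fib k * Nat.fib (k+1)) * (Nat.fib k * Nat.fib (k+1)) := by
          have hP : 0 < Nat.fib k * Nat.fib (k+1) := Nat.mul_pos hfkpos hfk1pos
          exact Nat.mul_lt_mul_of_lt_of_le (by omega) (le_refl _) hP
        have b1 : (Nat.fib k * Nat.fib (k+1)) * (Nat.fib k * Nat.fib (k+1))
            ≤ Nat.fib (2*k) * Nat.fib (2*k) := Nat.mul_le_mul hf2k hf2k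
        have h2 : Nat.fib n ^ 2 < Nat.fib (2*k) ^ 2 := by nlinarith [E1, c1, b1, hfkpos]
        exact no_sol k n (by omega) hdvd h1 h2
      · -- k odd, m = k+1 : F_n² + F_{k+1}² = (k+1) F_k F_{k+1}
        have hneg : ((-1 : ℤ))^k = -1 := hko.neg_one_pow
        rw [hneg] at hmaster
        push_cast at hmaster
        have hc := fib_cat k
        rw [hneg] at hc
        have E2 : Nat.fib n ^ 2 + Nat.fib (k+1) ^ 2 = (k+1) * Nat.fib k * Nat.fib (k+1) := by
          have key : ((Nat.fib n ^ 2 + Nat.fib (k+1) ^ 2 : ℕ) : ℤ)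
              = (((k+1) * Nat.fib k * Nat.fib (k+1) : ℕ) : ℤ) := by push_cast; linarith [hmaster, hc]
          exact_mod_cast key
        have hdvd : Nat.fib (k+1) ∣ Nat.fib n ^ 2 := by
          have hdsum : Nat.fib (k+1) ∣ Nat.fib n ^ 2 + Nat.fib (k+1) ^ 2 := by
            rw [E2]; exact ⟨(k+1) * Nat.fib k, by ring⟩
          have hdk2 : Nat.fib (k+1) ∣ Nat.fib (k+1) ^ 2 := ⟨Nat.fib (k+1), by ring⟩
          exact (Nat.dvd_add_iff_left hdk2).mpr hdsum
        have hhalf : Nat.fib (k+1) < 2 * Nat.fib k := by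
          obtain ⟨j, rfl⟩ : ∃ j, k = j + 3 := ⟨k - 3, by omega⟩
          show Nat.fib (j+4) < 2 * Nat.fib (j+3)
          have h1 : Nat.fib (j+4) = Nat.fib (j+2) + Nat.fib (j+3) := Nat.fib_add_two
          have h2 : Nat.fib (j+2) < Nat.fib (j+3) := Nat.fib_lt_fib_succ (by omega)
          omega
        have a1 : 4 * (Nat.fib k * Nat.fib (k+1)) ≤ (k+1) * (Nat.fib k * Nat.fib (k+1)) :=
          Nat.mul_le_mul (by omega) (le_refl _)
        have a2 : Nat.fib (k+1) * Nat.fib (k+1) < Nat.fib (k+1) * (2 * Nat.fib k) := by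
          exact Nat.mul_lt_mul_of_le_of_lt (le_refl _) hhalf hfk1pos
        have h1 : Nat.fib (k+1) ^ 2 < Nat.fib n ^ 2 := by nlinarith [E2, a1, a2]
        have c1 : (k+1) * (Nat.fib k * Nat.fib (k+1))
            ≤ (Nat.fib k * Nat.fib (k+1)) * (Nat.fib k * Nat.fib (k+1)) :=
          Nat.mul_le_mul hprod (le_refl _)
        have b1 : (Nat.fib k * Nat.fib (k+1)) * (Nat.fib k * Nat.fib (k+1))
            ≤ Nat.fib (2*k) * Nat.fib (2*k) := Nat.mul_le_mul hf2k hf2k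
        have b2 : Nat.fib (2*k) * Nat.fib (2*k) ≤ Nat.fib (2*(k+1)) * Nat.fib (2*(k+1)) := by
          have := Nat.fib_mono (show 2*k ≤ 2*(k+1) by omega)
          exact Nat.mul_le_mul this this
        have h2 : Nat.fib n ^ 2 < Nat.fib (2*(k+1)) ^ 2 := by
          have hpos : 0 < Nat.fib (k+1) ^ 2 := pow_pos hfk1pos 2
          calc Nat.fib n ^ 2 < Nat.fib n ^ 2 + Nat.fib (k+1) ^ 2 := by omega
            _ = (k+1) * Nat.fib k * Nat.fib (k+1) := E2
            _ = (k+1) * (Nat.fib k * Nat.fib (k+1)) := by ring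
            _ ≤ (Nat.fib k * Nat.fib (k+1)) * (Nat.fib k * Nat.fib (k+1)) := c1
            _ ≤ Nat.fib (2*k) * Nat.fib (2*k) := b1
            _ ≤ Nat.fib (2*(k+1)) * Nat.fib (2*(k+1)) := b2
            _ = Nat.fib (2*(k+1)) ^ 2 := (pow_two _).symm
        exact no_sol (k+1) n (by omega) hdvd h1 h2
  · rintro (h | h) <;> (injection h with h1 h2; subst h1; subst h2; decide)
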